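/- There exist 3×3 real structured matrices (sparsity patterns) for three subsystems (A_1,B_1), (A_2,B_2), (A_3,B_3) with (A_3,B_3) structurally equivalent to (A_1,B_1), such that the generic rank of [C_3, C_2, C_1] is 2, while for almost all parameter values and almost all h_2, h_3 > 0, rank [C_3, e^{A_3h_3}C_2, e^{A_3h_3}e^{A_2h_2}C_1] = 3. Concretely, take A_1 with single nonzero entry (2,1), B_1 = e_1, A_2 with single nonzero entry (3,2), B_2 = 0, (A_3,B_3) = (A_1,B_1)-patterned: then C_2 = 0 and rank[C_3,C_1] = 2, but for generic parameters rank[C_3, e^{A_3h_3}e^{A_2h_2}C_1] = 3. -/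

import Mathlib

open MeasureTheory

/-- The controllability matrix `C = [B, AB, A²B]` for `n = 3` (columns `Fin 3 × Fin 1`). -/
def ctrlMat3 (A : Matrix (Fin 3) (Fin 3) ℝ) (B : Matrix (Fin 3) (Fin 1) ℝ) :
    Matrix (Fin 3) (Fin 3 × Fin 1) ℝ :=
  fun i p => (A ^ (p.1 : ℕ) * B) i p.2

open Module

section Helpers


lemma exp_of_sq_eq_zero (M : Matrix (Fin 3) (Fin 3) ℝ) (h : M * M = 0) :
    NormedSpace.exp M = 1 + M := by
  rw [NormedSpace.exp_eq_tsum ℝ]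
  have hn : ∀ n : ℕ, n ∉ Finset.range 2 → (n.factorial⁻¹ : ℝ) • M ^ n = 0 := by
    intro n hn
    simp only [Finset.mem_range, not_lt] at hn
    obtain ⟨k, rfl⟩ := Nat.exists_eq_add_of_le hn
    rw [pow_add, pow_two, h, zero_mul, smul_zero]
  show ∑' n : ℕ, (n.factorial⁻¹ : ℝ) • M ^ n = 1 + M
  rw [tsum_eq_sum hn]
  simp [Finset.sum_range_succ]

lemma sqA1 (a : ℝ) :
    (!![0,0,0; a,0,0; 0,0,0] : Matrix (Fin 3) (Fin 3) ℝ) * !![0,0,0; a,0,0; 0,0,0] = 0 := by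
  ext i j
  fin_cases i <;> fin_cases j <;> simp [Matrix.mul_apply, Fin.sum_univ_three]

lemma sqA2 (a : ℝ) :
    (!![0,0,0; 0,0,0; 0,a,0] : Matrix (Fin 3) (Fin 3) ℝ) * !![0,0,0; 0,0,0; 0,a,0] = 0 := by
  ext i j
  fin_cases i <;> fin_cases j <;> simp [Matrix.mul_apply, Fin.sum_univ_three]

lemma expA1 (h a : ℝ) :
    NormedSpace.exp (h • (!![0,0,0; a,0,0; 0,0,0] : Matrix (Fin 3) (Fin 3) ℝ))
      = !![1,0,0; h*a,1,0; 0,0,1] := by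
  have h1 : h • (!![0,0,0; a,0,0; 0,0,0] : Matrix (Fin 3) (Fin 3) ℝ)
      = !![0,0,0; h*a,0,0; 0,0,0] := by
    ext i j; fin_cases i <;> fin_cases j <;> simp [Matrix.vecHead, Matrix.vecTail, mul_comm]
  rw [h1, exp_of_sq_eq_zero _ (sqA1 (h*a))]
  ext i j; fin_cases i <;> fin_cases j <;> simp [Matrix.one_apply, Matrix.vecHead, Matrix.vecTail]

lemma expA2 (h a : ℝ) :
    NormedSpace.exp (h • (!![0,0,0; 0,0,0; 0,a,0] : Matrix (Fin 3) (Fin 3) ℝ))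
      = !![1,0,0; 0,1,0; 0,h*a,1] := by
  have h1 : h • (!![0,0,0; 0,0,0; 0,a,0] : Matrix (Fin 3) (Fin 3) ℝ)
      = !![0,0,0; 0,0,0; 0,h*a,0] := by
    ext i j; fin_cases i <;> fin_cases j <;> simp [Matrix.vecHead, Matrix.vecTail, mul_comm]
  rw [h1, exp_of_sq_eq_zero _ (sqA2 (h*a))]
  ext i j; fin_cases i <;> fin_cases j <;> simp [Matrix.one_apply, Matrix.vecHead, Matrix.vecTail]

lemma ctrl1 (a b : ℝ) : ctrlMat3 !![0,0,0; a,0,0; 0,0,0] !![b;0;0]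
    = fun i p => !![b,0,0; 0,a*b,0; 0,0,0] i p.1 := by
  funext i p
  obtain ⟨k, l⟩ := p
  fin_cases k <;> fin_cases l <;> fin_cases i <;>
    simp [ctrlMat3, pow_succ, Matrix.mul_apply, Fin.sum_univ_three, Matrix.vecHead, Matrix.vecTail]

lemma ctrl2 (A : Matrix (Fin 3) (Fin 3) ℝ) : ctrlMat3 A 0 = 0 := by
  funext i p
  simp [ctrlMat3, Matrix.mul_zero]

lemma prodC1 (a₁ b₁ a₂ a₃ h₂ h₃ : ℝ) :
    (!![1,0,0; h₃*a₃,1,0; 0,0,1] : Matrix (Fin 3) (Fin 3) ℝ) * !![1,0,0; 0,1,0; 0,h₂*a₂,1] *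
      ctrlMat3 !![0,0,0; a₁,0,0; 0,0,0] !![b₁;0;0]
    = fun i p => !![b₁,0,0; h₃*a₃*b₁, a₁*b₁, 0; 0, h₂*a₂*(a₁*b₁), 0] i p.1 := by
  rw [ctrl1]
  funext i p
  erw [Matrix.mul_apply]
  obtain ⟨k, l⟩ := p
  fin_cases k <;> fin_cases l <;> fin_cases i <;>
    simp [Matrix.mul_apply, Fin.sum_univ_three, Matrix.vecHead, Matrix.vecTail]

lemma col_mem_range {n : Type*} [Fintype n] [DecidableEq n] (M : Matrix (Fin 3) n ℝ) (j : n) :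
    (fun i => M i j) ∈ LinearMap.range M.mulVecLin :=
  ⟨Pi.single j 1, by simp [Matrix.mulVecLin_apply, Matrix.mulVec_single]; rfl⟩

lemma finrank_ker_proj2 :
    finrank ℝ (LinearMap.ker (LinearMap.proj (R := ℝ) (φ := fun _ : Fin 3 => ℝ) 2)) = 2 := by
  have hsurj : Function.Surjective (LinearMap.proj (R := ℝ) (φ := fun _ : Fin 3 => ℝ) 2) := by
    intro x; exact ⟨fun _ => x, rfl⟩
  have h := LinearMap.finrank_range_add_finrank_ker
    (LinearMap.proj (R := ℝ) (φ := fun _ : Fin 3 => ℝ) 2)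
  rw [LinearMap.range_eq_top.mpr hsurj, finrank_top] at h
  simp at h
  omega

lemma rank_le_two_of_row2 {n : Type*} [Fintype n] (M : Matrix (Fin 3) n ℝ)
    (h : ∀ j, M 2 j = 0) : M.rank ≤ 2 := by
  classical
  have hle : LinearMap.range M.mulVecLin ≤
      LinearMap.ker (LinearMap.proj (R := ℝ) (φ := fun _ : Fin 3 => ℝ) 2) := by
    rintro x ⟨v, rfl⟩
    simp only [LinearMap.mem_ker, LinearMap.proj_apply, Matrix.mulVecLin_apply,
      Matrix.mulVec, dotProduct]
    simp [h]
  have := Submodule.finrank_mono hle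
  rw [finrank_ker_proj2] at this
  exact this

lemma rank_eq_three_of {n : Type*} [Fintype n] (M : Matrix (Fin 3) n ℝ)
    (h : ∀ i : Fin 3, (Pi.single i 1 : Fin 3 → ℝ) ∈ LinearMap.range M.mulVecLin) :
    M.rank = 3 := by
  have htop : LinearMap.range M.mulVecLin = ⊤ := by
    rw [← top_le_iff, ← (Pi.basisFun ℝ (Fin 3)).span_eq, Submodule.span_le]
    rintro x ⟨i, rfl⟩
    rw [Pi.basisFun_apply]
    exact h i
  rw [Matrix.rank, htop, finrank_top]
  simp

lemma two_le_rank_of {n : Type*} [Fintype n] (M : Matrix (Fin 3) n ℝ)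
    (h0 : (Pi.single 0 1 : Fin 3 → ℝ) ∈ LinearMap.range M.mulVecLin)
    (h1 : (Pi.single 1 1 : Fin 3 → ℝ) ∈ LinearMap.range M.mulVecLin) : 2 ≤ M.rank := by
  classical
  set b : Fin 2 → (Fin 3 → ℝ) := fun j => Pi.single (Fin.castLE (by norm_num) j) 1 with hb
  have hbli : LinearIndependent ℝ b := by
    have : b = (Pi.basisFun ℝ (Fin 3)) ∘ (Fin.castLE (by norm_num : (2:ℕ) ≤ 3)) := by
      funext j; simp [hb]
    rw [this]
    exact (Pi.basisFun ℝ (Fin 3)).linearIndependent.comp _ (Fin.castLE_injective _)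
  have hspan : Submodule.span ℝ (Set.range b) ≤ LinearMap.range M.mulVecLin := by
    rw [Submodule.span_le]
    rintro x ⟨j, rfl⟩
    fin_cases j
    · exact h0
    · exact h1
  have := Submodule.finrank_mono hspan
  rw [finrank_span_eq_card hbli] at this
  simpa [Matrix.rank] using this

lemma key_rank1 (a₁ b₁ a₃ b₃ : ℝ) :
    (Matrix.fromCols
      (fun i (p : Fin 3 × Fin 1) => (!![b₃,0,0; 0,a₃*b₃,0; 0,0,0] : Matrix (Fin 3) (Fin 3) ℝ) i p.1)
      (Matrix.fromCols (0 : Matrix (Fin 3) (Fin 3 × Fin 1) ℝ)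
        (fun i (p : Fin 3 × Fin 1) =>
          (!![b₁,0,0; 0,a₁*b₁,0; 0,0,0] : Matrix (Fin 3) (Fin 3) ℝ) i p.1))).rank ≤ 2 := by
  apply rank_le_two_of_row2
  rintro (p | p | p) <;>
    simp [Matrix.fromCols, Matrix.vecHead, Matrix.vecTail, Fin.forall_fin_succ] <;>
    · obtain ⟨k, l⟩ := p
      fin_cases k <;> simp [Matrix.vecHead, Matrix.vecTail]

lemma key_rank2 :
    (Matrix.fromCols
      (fun i (p : Fin 3 × Fin 1) =>
        (!![(1:ℝ),0,0; 0,1*1,0; 0,0,0] : Matrix (Fin 3) (Fin 3) ℝ) i p.1)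
      (Matrix.fromCols (0 : Matrix (Fin 3) (Fin 3 × Fin 1) ℝ)
        (fun i (p : Fin 3 × Fin 1) =>
          (!![(1:ℝ),0,0; 0,1*1,0; 0,0,0] : Matrix (Fin 3) (Fin 3) ℝ) i p.1))).rank = 2 := by
  set M := Matrix.fromCols
      (fun i (p : Fin 3 × Fin 1) =>
        (!![(1:ℝ),0,0; 0,1*1,0; 0,0,0] : Matrix (Fin 3) (Fin 3) ℝ) i p.1)
      (Matrix.fromCols (0 : Matrix (Fin 3) (Fin 3 × Fin 1) ℝ)
        (fun i (p : Fin 3 × Fin 1) =>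
          (!![(1:ℝ),0,0; 0,1*1,0; 0,0,0] : Matrix (Fin 3) (Fin 3) ℝ) i p.1)) with hM
  refine le_antisymm ?_ (two_le_rank_of M ?_ ?_)
  · have := key_rank1 1 1 1 1
    simpa [hM] using this
  · have heq : (Pi.single 0 1 : Fin 3 → ℝ)
        = fun i => M i (Sum.inl ((0 : Fin 3), (0 : Fin 1))) := by
      funext i
      fin_cases i <;>
        simp [hM, Matrix.fromCols, Pi.single_apply, Matrix.vecHead, Matrix.vecTail]
    rw [heq]
    exact col_mem_range M _
  · have heq : (Pi.single 1 1 : Fin 3 → ℝ)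
        = fun i => M i (Sum.inl ((1 : Fin 3), (0 : Fin 1))) := by
      funext i
      fin_cases i <;>
        simp [hM, Matrix.fromCols, Pi.single_apply, Matrix.vecHead, Matrix.vecTail]
    rw [heq]
    exact col_mem_range M _

lemma key_rank3 (a₁ b₁ a₂ a₃ b₃ h₂ h₃ : ℝ) (ha₁ : a₁ ≠ 0) (hb₁ : b₁ ≠ 0) (ha₂ : a₂ ≠ 0)
    (ha₃ : a₃ ≠ 0) (hb₃ : b₃ ≠ 0) (hh₂ : h₂ ≠ 0) :
    (Matrix.fromCols
      (fun i (p : Fin 3 × Fin 1) => (!![b₃,0,0; 0,a₃*b₃,0; 0,0,0] : Matrix (Fin 3) (Fin 3) ℝ) i p.1)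
      (Matrix.fromCols (0 : Matrix (Fin 3) (Fin 3 × Fin 1) ℝ)
        (fun i (p : Fin 3 × Fin 1) =>
          (!![b₁,0,0; h₃*a₃*b₁, a₁*b₁, 0; 0, h₂*a₂*(a₁*b₁), 0] : Matrix (Fin 3) (Fin 3) ℝ)
            i p.1))).rank = 3 := by
  set M := Matrix.fromCols
      (fun i (p : Fin 3 × Fin 1) => (!![b₃,0,0; 0,a₃*b₃,0; 0,0,0] : Matrix (Fin 3) (Fin 3) ℝ) i p.1)
      (Matrix.fromCols (0 : Matrix (Fin 3) (Fin 3 × Fin 1) ℝ)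
        (fun i (p : Fin 3 × Fin 1) =>
          (!![b₁,0,0; h₃*a₃*b₁, a₁*b₁, 0; 0, h₂*a₂*(a₁*b₁), 0] : Matrix (Fin 3) (Fin 3) ℝ)
            i p.1)) with hM
  apply rank_eq_three_of
  have e0 : (Pi.single 0 1 : Fin 3 → ℝ) ∈ LinearMap.range M.mulVecLin := by
    have heq : (Pi.single 0 1 : Fin 3 → ℝ)
        = b₃⁻¹ • (fun i => M i (Sum.inl ((0 : Fin 3), (0 : Fin 1)))) := by
      funext i
      fin_cases i <;>
        simp [hM, Matrix.fromCols, Pi.single_apply, Matrix.vecHead, Matrix.vecTail] <;>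
        (field_simp; try ring)
    rw [heq]
    exact Submodule.smul_mem _ _ (col_mem_range M _)
  have e1 : (Pi.single 1 1 : Fin 3 → ℝ) ∈ LinearMap.range M.mulVecLin := by
    have heq : (Pi.single 1 1 : Fin 3 → ℝ)
        = (a₃*b₃)⁻¹ • (fun i => M i (Sum.inl ((1 : Fin 3), (0 : Fin 1)))) := by
      funext i
      fin_cases i <;>
        simp [hM, Matrix.fromCols, Pi.single_apply, Matrix.vecHead, Matrix.vecTail] <;>
        (field_simp; try ring)
    rw [heq]
    exact Submodule.smul_mem _ _ (col_mem_range M _)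
  have e2 : (Pi.single 2 1 : Fin 3 → ℝ) ∈ LinearMap.range M.mulVecLin := by
    have heq : (Pi.single 2 1 : Fin 3 → ℝ)
        = (h₂*a₂*(a₁*b₁))⁻¹ • ((fun i => M i (Sum.inr (Sum.inr ((1 : Fin 3), (0 : Fin 1)))))
            - (a₁*b₁) • (Pi.single 1 1 : Fin 3 → ℝ)) := by
      funext i
      fin_cases i <;>
        simp [hM, Matrix.fromCols, Pi.single_apply, Matrix.vecHead, Matrix.vecTail] <;>
        (field_simp; try ring)
    rw [heq]
    exact Submodule.smul_mem _ _
      (Submodule.sub_mem _ (col_mem_range M _) (Submodule.smul_mem _ _ e1))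
  intro i
  fin_cases i
  exacts [e0, e1, e2]

lemma ae_fst_ne_zero {β : Type*} [MeasureSpace β] [SigmaFinite (volume : Measure β)] :
    ∀ᵐ p : ℝ × β ∂volume, p.1 ≠ 0 := by
  rw [ae_iff]
  refine measure_mono_null (?_ : _ ⊆ ({(0:ℝ)} : Set ℝ) ×ˢ (Set.univ : Set β)) ?_
  · intro p hp
    simp only [Set.mem_setOf_eq, not_not] at hp
    exact ⟨hp, trivial⟩
  · rw [Measure.volume_eq_prod, Measure.prod_prod]
    simp

lemma ae_snd_prop {β : Type*} [MeasureSpace β] [SigmaFinite (volume : Measure β)] {P : β → Prop}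
    (h : ∀ᵐ y : β ∂volume, P y) : ∀ᵐ p : ℝ × β ∂volume, P p.2 := by
  rw [ae_iff] at h ⊢
  refine measure_mono_null (?_ : _ ⊆ Set.univ ×ˢ (toMeasurable volume {y | ¬ P y})) ?_
  · intro p hp
    exact ⟨trivial, subset_toMeasurable _ _ hp⟩
  · rw [Measure.volume_eq_prod, Measure.prod_prod, measure_toMeasurable, h, mul_zero]

end Helpers

/-- Counterexample to Ezzine–Haddad's conjecture for `N = 3`: with
`A₁(a)` having single nonzero entry `(2,1)`, `B₁(b) = b·e₁`, `A₂(a)` having single nonzero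
entry `(3,2)`, `B₂ = 0`, and `(A₃,B₃)` patterned like `(A₁,B₁)` with independent parameters,
the generic rank of `[C₃, C₂, C₁]` is `2`, while for almost all parameters and almost all
`h₂, h₃ > 0`, `rank [C₃, e^{A₃h₃}C₂, e^{A₃h₃}e^{A₂h₂}C₁] = 3`. -/
theorem ezzine_haddad_counterexample :
    let A₁ : ℝ → Matrix (Fin 3) (Fin 3) ℝ := fun a => !![0,0,0; a,0,0; 0,0,0]
    let B₁ : ℝ → Matrix (Fin 3) (Fin 1) ℝ := fun b => !![b; 0; 0]
    let A₂ : ℝ → Matrix (Fin 3) (Fin 3) ℝ := fun a => !![0,0,0; 0,0,0; 0,a,0]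
    let B₂ : Matrix (Fin 3) (Fin 1) ℝ := 0
    -- generic rank of `[C₃, C₂, C₁]` is 2:
    (∀ a₁ b₁ a₂ a₃ b₃ : ℝ,
      (Matrix.fromCols (ctrlMat3 (A₁ a₃) (B₁ b₃))
        (Matrix.fromCols (ctrlMat3 (A₂ a₂) B₂) (ctrlMat3 (A₁ a₁) (B₁ b₁)))).rank ≤ 2) ∧
    (∃ a₁ b₁ a₂ a₃ b₃ : ℝ,
      (Matrix.fromCols (ctrlMat3 (A₁ a₃) (B₁ b₃))
        (Matrix.fromCols (ctrlMat3 (A₂ a₂) B₂) (ctrlMat3 (A₁ a₁) (B₁ b₁)))).rank = 2) ∧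
    -- while generically `rank [C₃, e^{A₃h₃}C₂, e^{A₃h₃}e^{A₂h₂}C₁] = 3`:
    (∀ᵐ p : ℝ × ℝ × ℝ × ℝ × ℝ × ℝ × ℝ ∂volume,
      match p with
      | (a₁, b₁, a₂, a₃, b₃, h₂, h₃) =>
        0 < h₂ → 0 < h₃ →
          (Matrix.fromCols (ctrlMat3 (A₁ a₃) (B₁ b₃))
            (Matrix.fromCols
              (NormedSpace.exp (h₃ • A₁ a₃) * ctrlMat3 (A₂ a₂) B₂)
              (NormedSpace.exp (h₃ • A₁ a₃) * NormedSpace.exp (h₂ • A₂ a₂) *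
                ctrlMat3 (A₁ a₁) (B₁ b₁)))).rank = 3) := by
  intro A₁ B₁ A₂ B₂
  simp only [A₁, B₁, A₂, B₂]
  refine ⟨?_, ?_, ?_⟩
  · intro a₁ b₁ a₂ a₃ b₃
    rw [ctrl1, ctrl1, ctrl2]
    exact key_rank1 a₁ b₁ a₃ b₃
  · refine ⟨1, 1, 1, 1, 1, ?_⟩
    rw [ctrl1, ctrl2]
    exact key_rank2
  · have h4 : ∀ᵐ p : ℝ × ℝ × ℝ ∂volume, p.1 ≠ 0 ∧ p.2.1 ≠ 0 :=
      ae_fst_ne_zero.and (ae_snd_prop (ae_fst_ne_zero (β := ℝ)))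
    have h3 : ∀ᵐ p : ℝ × ℝ × ℝ × ℝ ∂volume, p.1 ≠ 0 ∧ p.2.1 ≠ 0 ∧ p.2.2.1 ≠ 0 :=
      ae_fst_ne_zero.and (ae_snd_prop h4)
    have h2 : ∀ᵐ p : ℝ × ℝ × ℝ × ℝ × ℝ ∂volume,
        p.1 ≠ 0 ∧ p.2.1 ≠ 0 ∧ p.2.2.1 ≠ 0 ∧ p.2.2.2.1 ≠ 0 :=
      ae_fst_ne_zero.and (ae_snd_prop h3)
    have h1 : ∀ᵐ p : ℝ × ℝ × ℝ × ℝ × ℝ × ℝ ∂volume,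
        p.1 ≠ 0 ∧ p.2.1 ≠ 0 ∧ p.2.2.1 ≠ 0 ∧ p.2.2.2.1 ≠ 0 :=
      ae_fst_ne_zero.and (ae_snd_prop h2 |>.mono (by tauto))
    have h0 : ∀ᵐ p : ℝ × ℝ × ℝ × ℝ × ℝ × ℝ × ℝ ∂volume,
        p.1 ≠ 0 ∧ p.2.1 ≠ 0 ∧ p.2.2.1 ≠ 0 ∧ p.2.2.2.1 ≠ 0 ∧ p.2.2.2.2.1 ≠ 0 :=
      ae_fst_ne_zero.and (ae_snd_prop h1)
    filter_upwards [h0] with p hp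
    obtain ⟨a₁, b₁, a₂, a₃, b₃, h₂, h₃⟩ := p
    obtain ⟨ha₁, hb₁, ha₂, ha₃, hb₃⟩ := hp
    intro hh₂ _
    rw [expA1, expA2, ctrl2, Matrix.mul_zero, prodC1, ctrl1]
    exact key_rank3 a₁ b₁ a₂ a₃ b₃ h₂ h₃ ha₁ hb₁ ha₂ ha₃ hb₃ (ne_of_gt hh₂)
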